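/- arXiv:2510.20249 — 4 statements merged into one kernel-verified Lean document; each statement's English description precedes it below -/
import Mathlib

section
/- Let B be holomorphic on the upper half-plane with |B(λ)| < 1 there, and assume the strict Schwarz–Pick inequality |B'(λ)| < (1 - |B(λ)|²)/(2 Im λ) holds for every λ in the upper half-plane. Then for each fixed u ∈ ℝ, the function v ↦ (1 - |B(u + iv)|²)/(2v) is strictly decreasing for v ∈ (0, ∞). -/
open Complex Set

/-- If `B` is holomorphic on the upper half-plane with `|B| < 1` there and the strict
Schwarz–Pick inequality `2 (Im λ) |B'(λ)| < 1 - |B(λ)|²` holds, then for each `u ∈ ℝ`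
the function `v ↦ (1 - |B(u+iv)|²)/(2v)` is strictly decreasing on `(0, ∞)`. -/
theorem stmt1 (B : ℂ → ℂ)
    (hB : DifferentiableOn ℂ B {z : ℂ | 0 < z.im})
    (hB1 : ∀ z : ℂ, 0 < z.im → ‖B z‖ < 1)
    (hSP : ∀ z : ℂ, 0 < z.im →
      2 * z.im * ‖deriv B z‖ < 1 - ‖B z‖^2) :
    ∀ u : ℝ, StrictAntiOn
      (fun v : ℝ => (1 - ‖B (u + v * Complex.I)‖^2) / (2 * v))
      (Set.Ioi (0 : ℝ)) := by
  intro u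
  set f : ℝ → ℝ :=
    fun v : ℝ => (1 - ‖B (u + v * Complex.I)‖^2) / (2 * v) with hf
  have hopen : IsOpen {z : ℂ | 0 < z.im} := isOpen_lt continuous_const Complex.continuous_im
  have key : ∀ v : ℝ, 0 < v → ∃ f', HasDerivAt f f' v ∧ f' < 0 := by
    intro v hv
    set z : ℂ := (u : ℂ) + (v : ℂ) * Complex.I with hzdef
    have hzim : 0 < z.im := by simp [hzdef, hv]
    have hBd : DifferentiableAt ℂ B z := hB.differentiableAt (hopen.mem_nhds hzim)
    -- inner curve
    have hcurve : HasDerivAt (fun t : ℝ => (u : ℂ) + (t : ℂ) * Complex.I) Complex.I v := by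
      have h1 : HasDerivAt (fun t : ℝ => (t : ℂ)) 1 v := by
        simpa using (hasDerivAt_id v).ofReal_comp
      simpa using (h1.mul_const Complex.I).const_add (u : ℂ)
    -- derivative of the composed curve
    set c : ℂ := deriv B z with hc
    set d : ℂ := Complex.I * c with hd
    have hcomp : HasDerivAt (fun t : ℝ => B ((u : ℂ) + (t : ℂ) * Complex.I)) d v := by
      have h1 : HasFDerivAt B
          ((ContinuousLinearMap.smulRight (1 : ℂ →L[ℂ] ℂ) c).restrictScalars ℝ) z :=
        (hBd.hasDerivAt.hasFDerivAt).restrictScalars ℝ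
      have := h1.comp_hasDerivAt v hcurve
      simpa [hd, smul_eq_mul, mul_comm, Function.comp_def] using this
    have hre : HasDerivAt (fun t : ℝ => (B ((u : ℂ) + (t : ℂ) * Complex.I)).re) d.re v :=
      (Complex.reCLM.hasFDerivAt.comp_hasDerivAt v hcomp)
    have him : HasDerivAt (fun t : ℝ => (B ((u : ℂ) + (t : ℂ) * Complex.I)).im) d.im v :=
      (Complex.imCLM.hasFDerivAt.comp_hasDerivAt v hcomp)
    set a : ℝ := (B z).re with ha
    set b : ℝ := (B z).im with hb
    set g' : ℝ := 2 * a * d.re + 2 * b * d.im with hg'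
    have hg : HasDerivAt
        (fun t : ℝ => (B ((u : ℂ) + (t : ℂ) * Complex.I)).re ^ 2
          + (B ((u : ℂ) + (t : ℂ) * Complex.I)).im ^ 2) g' v := by
      have := (hre.pow 2).add (him.pow 2)
      simpa [hg', ha, hb, hzdef, mul_comm, mul_assoc, mul_left_comm, Pi.pow_def, Pi.add_def] using this
    have hne : (2 : ℝ) * v ≠ 0 := by positivity
    have hden : HasDerivAt (fun t : ℝ => 2 * t) 2 v := by
      simpa using (hasDerivAt_id v).const_mul 2
    have habs : ∀ t : ℝ, f t = (1 - ((B ((u : ℂ) + (t : ℂ) * Complex.I)).re ^ 2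
        + (B ((u : ℂ) + (t : ℂ) * Complex.I)).im ^ 2)) / (2 * t) := by
      intro t
      rw [hf]
      simp only
      rw [Complex.sq_norm, Complex.normSq_apply]
      ring_nf
    set F' : ℝ := ((0 - g') * (2 * v) - (1 - (a ^ 2 + b ^ 2)) * 2) / (2 * v) ^ 2 with hF'
    have hfd : HasDerivAt f F' v := by
      have := ((hasDerivAt_const v (1 : ℝ)).sub hg).div hden hne
      have heq : f = fun t : ℝ => (1 - ((B ((u : ℂ) + (t : ℂ) * Complex.I)).re ^ 2
          + (B ((u : ℂ) + (t : ℂ) * Complex.I)).im ^ 2)) / (2 * t) := funext habs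
      rw [heq]
      simpa [hF', ha, hb, hzdef, Pi.div_def, Pi.sub_def] using this
    refine ⟨F', hfd, ?_⟩
    -- now prove F' < 0
    have hA : ‖B z‖ < 1 := hB1 z hzim
    have hSPz : 2 * v * ‖c‖ < 1 - ‖B z‖^2 := by
      have := hSP z hzim
      simpa [hc, hzdef] using this
    have habsd : ‖d‖ = ‖c‖ := by
      simp [hd]
    -- bound on the cross term
    have hcross : |a * d.re + b * d.im| ≤ ‖B z‖ * ‖d‖ := by
      have hw : a * d.re + b * d.im = ((starRingEnd ℂ) (B z) * d).re := by
        simp [Complex.mul_re, ha, hb]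
        try ring
      rw [hw]
      calc |((starRingEnd ℂ) (B z) * d).re| ≤ ‖(starRingEnd ℂ) (B z) * d‖ :=
            Complex.abs_re_le_norm _
        _ = ‖B z‖ * ‖d‖ := by
            rw [norm_mul, Complex.norm_conj]
    have hg2 : a ^ 2 + b ^ 2 = ‖B z‖ ^ 2 := by
      rw [Complex.sq_norm, Complex.normSq_apply, ha, hb]; ring
    have habsnn : (0 : ℝ) ≤ ‖d‖ := norm_nonneg _
    have hBnn : (0 : ℝ) ≤ ‖B z‖ := norm_nonneg _
    -- key inequality: (1 - |B|²) + v * g' > 0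
    have hkey : 0 < (1 - (a ^ 2 + b ^ 2)) + v * g' := by
      have h1 : v * g' ≥ -(2 * v * (‖B z‖ * ‖d‖)) := by
        have : -(‖B z‖ * ‖d‖) ≤ a * d.re + b * d.im :=
          neg_le_of_abs_le hcross
        nlinarith
      have h2 : 2 * v * (‖B z‖ * ‖d‖) ≤ 2 * v * ‖d‖ := by
        have := mul_le_of_le_one_left habsnn hA.le
        nlinarith
      rw [hg2]
      rw [habsd] at h1 h2
      linarith
    rw [hF']
    apply div_neg_of_neg_of_pos
    · nlinarith
    · positivity
  have hcont : ContinuousOn f (Set.Ioi (0 : ℝ)) := fun v hv => by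
    obtain ⟨f', hfd, _⟩ := key v hv
    exact hfd.continuousAt.continuousWithinAt
  have := strictAntiOn_of_deriv_neg (convex_Ioi (0 : ℝ)) hcont (fun v hv => by
    rw [interior_Ioi] at hv
    obtain ⟨f', hfd, hneg⟩ := key v hv
    rw [hfd.deriv]; exact hneg)
  exact this
end

section
/- Let B be holomorphic in a neighborhood of u ∈ ℝ with |B| = 1 on ℝ near u and B(u) = 1, and let θ be a real-analytic local phase (B = e^{iθ} on ℝ near u) with θ'(u) > 0. Then the limit ω(u) := lim_{ε→0+} [ 1/(4ε²) - |B'(u+iε)|²/(1 - |B(u+iε)|²)² ] exists and equals (1/4)[ (θ'(u))²/3 + (2/3)·θ'''(u)/θ'(u) - (θ''(u)/θ'(u))² ]. -/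
open Complex Filter Set Asymptotics Topology

private lemma conj_conj_hasDerivAt {f : ℂ → ℂ} {c z : ℂ}
    (h : HasDerivAt f c ((starRingEnd ℂ) z)) :
    HasDerivAt (fun w => (starRingEnd ℂ) (f ((starRingEnd ℂ) w))) ((starRingEnd ℂ) c) z := by
  rw [hasDerivAt_iff_tendsto] at h ⊢
  have hconj : Tendsto (fun w : ℂ => (starRingEnd ℂ) w) (𝓝 z) (𝓝 ((starRingEnd ℂ) z)) :=
    Complex.continuous_conj.continuousAt
  have H := h.comp hconj
  refine H.congr fun w => ?_
  simp only [Function.comp_apply]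
  have h1 : ‖(starRingEnd ℂ) w - (starRingEnd ℂ) z‖ = ‖w - z‖ := by
    rw [← map_sub]; exact norm_star _
  have h2 : ‖f ((starRingEnd ℂ) w) - f ((starRingEnd ℂ) z)
      - ((starRingEnd ℂ) w - (starRingEnd ℂ) z) • c‖
      = ‖(starRingEnd ℂ) (f ((starRingEnd ℂ) w)) - (starRingEnd ℂ) (f ((starRingEnd ℂ) z))
        - (w - z) • (starRingEnd ℂ) c‖ := by
    rw [← norm_star]
    congr 1
    simp only [smul_eq_mul, Complex.star_def, map_sub, map_mul, Complex.conj_conj]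
  rw [h1, h2]

set_option maxHeartbeats 2000000 in
/-- Boundary value of the curvature function: if `B` is holomorphic near `u ∈ ℝ`,
unimodular on `ℝ` near `u`, `B(u) = 1`, with real-analytic local phase `θ`
satisfying `θ'(u) > 0`, then
`lim_{ε→0⁺} [1/(4ε²) - |B'(u+iε)|²/(1-|B(u+iε)|²)²]`
equals `(1/4)[(θ'(u))²/3 + (2/3) θ'''(u)/θ'(u) - (θ''(u)/θ'(u))²]`. -/
theorem stmt13 (B : ℂ → ℂ) (u : ℝ)
    (hB : ∃ U : Set ℂ, IsOpen U ∧ (u : ℂ) ∈ U ∧ DifferentiableOn ℂ B U)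
    (hBu : B (u : ℂ) = 1)
    (θ : ℝ → ℝ) (hθ : AnalyticAt ℝ θ u) (hθ' : 0 < deriv θ u)
    (hphase : ∀ᶠ x : ℝ in nhds u, B (x : ℂ) = Complex.exp ((θ x : ℂ) * Complex.I))
    (huni : ∀ᶠ x : ℝ in nhds u, ‖B (x : ℂ)‖ = 1) :
    Tendsto (fun ε : ℝ =>
        1 / (4 * ε^2) -
          (‖deriv B ((u : ℂ) + ε * Complex.I)‖)^2 /
            (1 - (‖B ((u : ℂ) + ε * Complex.I)‖)^2)^2)
      (nhdsWithin 0 (Set.Ioi 0))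
      (nhds ((1 / 4) * ((deriv θ u)^2 / 3
        + (2 / 3) * (deriv (deriv (deriv θ)) u / deriv θ u)
        - (deriv (deriv θ) u / deriv θ u)^2))) := by
  obtain ⟨U, hUo, hUu, hBd⟩ := hB
  set t : ℝ := deriv θ u with ht
  set s2 : ℝ := deriv (deriv θ) u with hs2
  set r3 : ℝ := deriv (deriv (deriv θ)) u with hr3
  have htne : t ≠ 0 := ne_of_gt hθ'
  have hBanal : AnalyticAt ℂ B (u : ℂ) := hBd.analyticAt (hUo.mem_nhds hUu)
  have hAOn : AnalyticOnNhd ℂ B U := hBd.analyticOnNhd hUo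
  have hB1U : AnalyticOnNhd ℂ (deriv B) U := hAOn.deriv
  have hB2U : AnalyticOnNhd ℂ (deriv (deriv B)) U := hB1U.deriv
  set d1 : ℂ := deriv B (u : ℂ) with hd1def
  set d2 : ℂ := deriv (deriv B) (u : ℂ) with hd2def
  set d3 : ℂ := deriv (deriv (deriv B)) (u : ℂ) with hd3def
  -- ### Part 1: values of derivatives of B at u in terms of θ
  have hder_vals : d1 = I * t ∧ d2 = I * s2 - (t:ℂ)^2 ∧
      d3 = I * r3 - 3 * t * s2 - I * (t:ℂ)^3 := by
    obtain ⟨s, hsub, hs_open, hs_mem⟩ := eventually_nhds_iff.mp hθ.eventually_analyticAt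
    have hθs : AnalyticOnNhd ℝ θ s := fun x hx => hsub x hx
    have hθ1s : AnalyticOnNhd ℝ (deriv θ) s := hθs.deriv
    have hθ2s : AnalyticOnNhd ℝ (deriv (deriv θ)) s := hθ1s.deriv
    set fC : ℝ → ℂ := fun x => Complex.exp ((θ x : ℂ) * I) with hfC
    have hfCd : ∀ x ∈ s, HasDerivAt fC (I * ((deriv θ x : ℝ) : ℂ) * fC x) x := by
      intro x hx
      have h1 : HasDerivAt (fun y : ℝ => ((θ y : ℝ) : ℂ)) ((deriv θ x : ℝ) : ℂ) x :=
        ((hθs x hx).differentiableAt.hasDerivAt).ofReal_comp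
      have h2 := (h1.mul_const I).cexp
      convert h2 using 1
      ring
    set F1 : ℝ → ℂ := fun x => I * ((deriv θ x : ℝ) : ℂ) * fC x with hF1
    set F2 : ℝ → ℂ := fun x => I * ((deriv (deriv θ) x : ℝ) : ℂ) * fC x
        + I * ((deriv θ x : ℝ) : ℂ) * (I * ((deriv θ x : ℝ) : ℂ) * fC x) with hF2
    have hmulI : ∀ (g : ℝ → ℝ) (g' : ℝ) (x : ℝ), HasDerivAt g g' x →
        HasDerivAt (fun y : ℝ => I * (g y : ℂ)) (I * (g' : ℂ)) x := by
      intro g g' x hg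
      have := (hg.ofReal_comp).const_mul I
      simpa using this
    have hF1d : ∀ x ∈ s, HasDerivAt F1 (F2 x) x := by
      intro x hx
      have ha : HasDerivAt (fun y : ℝ => I * ((deriv θ y : ℝ) : ℂ)) (I * ((deriv (deriv θ) x : ℝ) : ℂ)) x :=
        hmulI _ _ _ ((hθ1s x hx).differentiableAt.hasDerivAt)
      exact ha.mul (hfCd x hx)
    have hF2d : HasDerivAt F2
        ((I * ((r3:ℝ):ℂ) * fC u + I * ((s2:ℝ):ℂ) * (I * ((t:ℝ):ℂ) * fC u))
          + (I * ((s2:ℝ):ℂ) * F1 u + I * ((t:ℝ):ℂ) * F2 u)) u := by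
      have ha : HasDerivAt (fun y : ℝ => I * ((deriv (deriv θ) y : ℝ) : ℂ)) (I * ((r3:ℝ):ℂ)) u :=
        hmulI _ _ _ ((hθ2s u hs_mem).differentiableAt.hasDerivAt)
      have hb : HasDerivAt (fun y : ℝ => I * ((deriv θ y : ℝ) : ℂ)) (I * ((s2:ℝ):ℂ)) u :=
        hmulI _ _ _ ((hθ1s u hs_mem).differentiableAt.hasDerivAt)
      have h1 := ha.mul (hfCd u hs_mem)
      have h2 := hb.mul (hF1d u hs_mem)
      exact h1.add h2
    have hUev : ∀ᶠ x : ℝ in 𝓝 u, ((x:ℝ):ℂ) ∈ U :=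
      (Complex.continuous_ofReal.tendsto u).eventually (hUo.eventually_mem hUu)
    have hg : ∀ᶠ x : ℝ in 𝓝 u, deriv (fun y : ℝ => B (y:ℂ)) x = deriv B (x:ℂ) := by
      filter_upwards [hUev] with x hx
      exact (((hBd.differentiableAt (hUo.mem_nhds hx)).hasDerivAt).comp_ofReal).deriv
    have hg1 : ∀ᶠ x : ℝ in 𝓝 u, deriv (fun y : ℝ => deriv B (y:ℂ)) x
        = deriv (deriv B) (x:ℂ) := by
      filter_upwards [hUev] with x hx
      exact ((((hB1U _ hx).differentiableAt).hasDerivAt).comp_ofReal).deriv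
    have hg2 : ∀ᶠ x : ℝ in 𝓝 u, deriv (fun y : ℝ => deriv (deriv B) (y:ℂ)) x
        = deriv (deriv (deriv B)) (x:ℂ) := by
      filter_upwards [hUev] with x hx
      exact ((((hB2U _ hx).differentiableAt).hasDerivAt).comp_ofReal).deriv
    have hres : (fun y : ℝ => B (y:ℂ)) =ᶠ[𝓝 u] fC := hphase
    have hfCder_ev : ∀ᶠ x in 𝓝 u, deriv fC x = F1 x := by
      filter_upwards [hs_open.eventually_mem hs_mem] with x hx using (hfCd x hx).deriv
    have e1 : (fun x : ℝ => deriv B (x:ℂ)) =ᶠ[𝓝 u] F1 := by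
      have hd := hres.deriv
      filter_upwards [hg, hd, hfCder_ev] with x h1 h2 h3
      rw [← h1, h2, h3]
    have hfCu : fC u = 1 := by
      rw [hfC]
      exact (hres.eq_of_nhds).symm.trans hBu
    have hd1v : d1 = F1 u := e1.eq_of_nhds
    have e2 : (fun x : ℝ => deriv (deriv B) (x:ℂ)) =ᶠ[𝓝 u] deriv F1 := by
      have hd := e1.deriv
      filter_upwards [hg1, hd] with x h1 h2
      rw [← h1]; exact h2
    have hF1du : HasDerivAt F1 (F2 u) u := hF1d u hs_mem
    have hd2v : d2 = F2 u := by
      have h := e2.eq_of_nhds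
      rw [hd2def, h, hF1du.deriv]
    have hF1der_ev : ∀ᶠ x in 𝓝 u, deriv F1 x = F2 x := by
      filter_upwards [hs_open.eventually_mem hs_mem] with x hx using (hF1d x hx).deriv
    have e3 : (fun x : ℝ => deriv (deriv (deriv B)) (x:ℂ)) =ᶠ[𝓝 u] deriv F2 := by
      have hd := e2.deriv
      filter_upwards [hg2, hd, hF1der_ev.eventually_nhds] with x h1 h2 h3
      rw [← h1, h2]
      exact Filter.EventuallyEq.deriv_eq h3
    have hd3v : d3 = deriv F2 u := by
      rw [hd3def]; exact e3.eq_of_nhds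
    refine ⟨?_, ?_, ?_⟩
    · rw [hd1v]
      simp only [hF1, hfCu]
      rw [← ht]
      ring
    · rw [hd2v]
      simp only [hF2, hfCu]
      rw [← ht, ← hs2]
      linear_combination ((t:ℂ)^2) * Complex.I_sq
    · rw [hd3v, hF2d.deriv]
      simp only [hF1, hF2, hfCu]
      rw [← ht, ← hs2]
      linear_combination (3*(t:ℂ)*(s2:ℂ) + I*(t:ℂ)^3) * Complex.I_sq
  obtain ⟨hd1, hd2, hd3⟩ := hder_vals
  -- ### Part 2: reflection identities
  obtain ⟨r, hr0, hrefl⟩ : ∃ r > (0:ℝ), ∀ ε : ℝ, |ε| < r →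
      B ((u:ℂ) - ε * I) ≠ 0 ∧
      (starRingEnd ℂ) (B ((u:ℂ) + ε * I)) = (B ((u:ℂ) - ε * I))⁻¹ ∧
      (starRingEnd ℂ) (deriv B ((u:ℂ) + ε * I))
        = -(deriv B ((u:ℂ) - ε * I)) / (B ((u:ℂ) - ε * I))^2 := by
    have hconjU : IsOpen ((fun z : ℂ => (starRingEnd ℂ) z) ⁻¹' U) :=
      hUo.preimage Complex.continuous_conj
    have huV : (u:ℂ) ∈ U ∩ ((fun z : ℂ => (starRingEnd ℂ) z) ⁻¹' U) := by
      refine ⟨hUu, ?_⟩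
      simp only [Set.mem_preimage, Complex.conj_ofReal]
      exact hUu
    obtain ⟨r, hr0, hball⟩ := Metric.isOpen_iff.mp (hUo.inter hconjU) _ huV
    have hBder : ∀ z ∈ Metric.ball ((u:ℝ):ℂ) r, HasDerivAt B (deriv B z) z := fun z hz =>
      ((hBd.differentiableAt (hUo.mem_nhds (hball hz).1)).hasDerivAt)
    have hBsder : ∀ z ∈ Metric.ball ((u:ℝ):ℂ) r,
        HasDerivAt (fun w => (starRingEnd ℂ) (B ((starRingEnd ℂ) w)))
          ((starRingEnd ℂ) (deriv B ((starRingEnd ℂ) z))) z := fun z hz =>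
      conj_conj_hasDerivAt ((hBd.differentiableAt (hUo.mem_nhds (hball hz).2)).hasDerivAt)
    set F : ℂ → ℂ := fun z => (starRingEnd ℂ) (B ((starRingEnd ℂ) z)) * B z with hF
    have hFder : ∀ z ∈ Metric.ball ((u:ℝ):ℂ) r, HasDerivAt F
        ((starRingEnd ℂ) (deriv B ((starRingEnd ℂ) z)) * B z
          + (starRingEnd ℂ) (B ((starRingEnd ℂ) z)) * deriv B z) z := fun z hz =>
      (hBsder z hz).mul (hBder z hz)
    have hFanal : AnalyticOnNhd ℂ F (Metric.ball ((u:ℝ):ℂ) r) :=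
      DifferentiableOn.analyticOnNhd
        (fun z hz => ((hFder z hz).differentiableAt.differentiableWithinAt))
        Metric.isOpen_ball
    have hseq : Tendsto (fun n : ℕ => u + 1/((n:ℝ)+1)) atTop (𝓝 u) := by
      have h0 : Tendsto (fun n : ℕ => 1/((n:ℝ)+1)) atTop (𝓝 0) :=
        tendsto_one_div_add_atTop_nhds_zero_nat
      simpa using tendsto_const_nhds.add h0
    have hfreq : ∃ᶠ z in 𝓝[≠] ((u:ℝ):ℂ), F z = (fun _ => (1:ℂ)) z := by
      have hseqC : Tendsto (fun n : ℕ => ((u + 1/((n:ℝ)+1) : ℝ) : ℂ)) atTop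
          (𝓝[≠] ((u:ℝ):ℂ)) := by
        rw [tendsto_nhdsWithin_iff]
        constructor
        · exact (Complex.continuous_ofReal.tendsto u).comp hseq
        · filter_upwards with n
          have hpos : (0:ℝ) < 1/((n:ℝ)+1) := by positivity
          simp only [mem_compl_iff, mem_singleton_iff]
          intro hcon
          rw [Complex.ofReal_inj] at hcon
          linarith
      apply hseqC.frequently
      apply Filter.Eventually.frequently
      filter_upwards [hseq.eventually huni] with n hn
      show F _ = 1
      rw [hF]
      simp only [Complex.conj_ofReal]
      rw [mul_comm, Complex.mul_conj, Complex.normSq_eq_norm_sq, hn]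
      norm_num
    have hEq : EqOn F (fun _ => (1:ℂ)) (Metric.ball ((u:ℝ):ℂ) r) :=
      hFanal.eqOn_of_preconnected_of_frequently_eq analyticOnNhd_const
        (convex_ball _ _).isPreconnected (Metric.mem_ball_self hr0) hfreq
    refine ⟨r, hr0, fun ε hεr => ?_⟩
    have hwball : ((u:ℂ) - ε * I) ∈ Metric.ball ((u:ℝ):ℂ) r := by
      rw [Metric.mem_ball, Complex.dist_eq]
      have he : (u:ℂ) - ε * I - u = -((ε:ℂ) * I) := by ring
      rw [he]
      rw [norm_neg, norm_mul, Complex.norm_I, Complex.norm_real, Real.norm_eq_abs, mul_one]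
      exact hεr
    have hconjw : (starRingEnd ℂ) ((u:ℂ) - ε * I) = (u:ℂ) + ε * I := by
      rw [map_sub, map_mul, Complex.conj_ofReal, Complex.conj_ofReal, Complex.conj_I]; ring
    have hmul1 : (starRingEnd ℂ) (B ((u:ℂ) + ε * I)) * B ((u:ℂ) - ε * I) = 1 := by
      have h := hEq hwball
      rw [hF] at h
      simp only at h
      rwa [hconjw] at h
    have hBw0 : B ((u:ℂ) - ε * I) ≠ 0 := by
      intro h0; rw [h0, mul_zero] at hmul1; exact one_ne_zero hmul1.symm
    have hcz : (starRingEnd ℂ) (B ((u:ℂ) + ε * I)) = (B ((u:ℂ) - ε * I))⁻¹ :=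
      eq_inv_of_mul_eq_one_left hmul1
    have hFeq : F =ᶠ[𝓝 ((u:ℂ) - ε * I)] fun _ => 1 :=
      Filter.eventuallyEq_of_mem (Metric.isOpen_ball.mem_nhds hwball) hEq
    have hval0 : (starRingEnd ℂ) (deriv B ((starRingEnd ℂ) ((u:ℂ) - ε*I))) * B ((u:ℂ) - ε*I)
        + (starRingEnd ℂ) (B ((starRingEnd ℂ) ((u:ℂ) - ε*I))) * deriv B ((u:ℂ) - ε*I) = 0 := by
      rw [← (hFder _ hwball).deriv, hFeq.deriv_eq]
      exact deriv_const _ _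
    rw [hconjw, hcz] at hval0
    refine ⟨hBw0, hcz, ?_⟩
    field_simp at hval0 ⊢
    linear_combination hval0
  -- ### Part 3: slope limit for the difference
  have hD : Tendsto (fun ε : ℝ => (B ((u:ℂ) - ε * I) - B ((u:ℂ) + ε * I)) / (ε:ℂ))
      (𝓝[≠] (0:ℝ)) (𝓝 (-2 * I * d1)) := by
    have h0 : ∀ x : ℝ, HasDerivAt (fun ε : ℝ => ((ε:ℝ):ℂ)) 1 x := fun x => by
      simpa using (hasDerivAt_id x).ofReal_comp
    have hplus : HasDerivAt (fun ε : ℝ => (u:ℂ) + ε * I) I 0 := by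
      simpa using (((h0 0).mul_const I).const_add (u:ℂ))
    have hminus : HasDerivAt (fun ε : ℝ => (u:ℂ) - ε * I) (-I) 0 := by
      simpa using (((h0 0).mul_const I).const_sub (u:ℂ))
    have hBat : HasDerivAt B d1 ((u:ℂ)) := (hBd.differentiableAt (hUo.mem_nhds hUu)).hasDerivAt
    have hBp : HasDerivAt (fun ε : ℝ => B ((u:ℂ) + ε * I)) (I * d1) 0 := by
      have h : HasDerivAt (B ∘ fun ε : ℝ => (u:ℂ) + ε * I) (I • d1) 0 :=
        HasDerivAt.scomp (h := fun ε : ℝ => (u:ℂ) + ε * I) 0 (by simpa using hBat) hplus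
      simpa [Function.comp_def, smul_eq_mul] using h
    have hBm : HasDerivAt (fun ε : ℝ => B ((u:ℂ) - ε * I)) (-I * d1) 0 := by
      have h : HasDerivAt (B ∘ fun ε : ℝ => (u:ℂ) - ε * I) ((-I) • d1) 0 :=
        HasDerivAt.scomp (h := fun ε : ℝ => (u:ℂ) - ε * I) 0 (by simpa using hBat) hminus
      simpa [Function.comp_def, smul_eq_mul] using h
    have hsub : HasDerivAt (fun ε : ℝ => B ((u:ℂ) - ε*I) - B ((u:ℂ) + ε*I))
        (-I*d1 - I*d1) 0 := hBm.sub hBp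
    have hval : -I*d1 - I*d1 = -2*I*d1 := by ring
    rw [hval] at hsub
    have hslope := hasDerivAt_iff_tendsto_slope.mp hsub
    refine hslope.congr fun ε => ?_
    rw [slope_def_module]
    simp only [Complex.ofReal_zero, zero_mul, add_zero, sub_zero, hBu, sub_self,
      Complex.real_smul, Complex.ofReal_inv]
    ring
  -- ### Part 4: limit of the numerator over ε⁴
  have hN : Tendsto (fun ε : ℝ =>
      ((B ((u:ℂ) - ε * I) - B ((u:ℂ) + ε * I))^2
        + 4 * (ε:ℂ)^2 * (deriv B ((u:ℂ) + ε * I)) * (deriv B ((u:ℂ) - ε * I))) / (ε:ℂ)^4)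
      (𝓝[≠] (0:ℝ)) (𝓝 (4 * d2^2 - 8/3 * d1 * d3)) := by
    obtain ⟨p, hp⟩ := hBanal
    obtain ⟨q, hq⟩ := hB1U (u:ℂ) hUu
    have hfac : ∀ (f : ℂ → ℂ) (pp : FormalMultilinearSeries ℂ ℂ ℂ),
        HasFPowerSeriesAt f pp (u:ℂ) →
        ∀ n : ℕ, (n.factorial : ℂ) * pp.coeff n = iteratedDeriv n f (u:ℂ) := by
      intro f pp hpp n
      obtain ⟨R, hR⟩ := hpp
      have h1 := hR.factorial_smul (1:ℂ) n
      rw [FormalMultilinearSeries.apply_eq_pow_smul_coeff, one_pow, one_smul] at h1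
      rw [iteratedDeriv_eq_iteratedFDeriv, ← h1, nsmul_eq_mul]
    have hi2 : iteratedDeriv 2 B = deriv (deriv B) := by
      rw [iteratedDeriv_succ, iteratedDeriv_one]
    have hi3 : iteratedDeriv 3 B = deriv (deriv (deriv B)) := by
      rw [iteratedDeriv_succ, hi2]
    have hc0 : p.coeff 0 = 1 := by
      have h := hfac B p hp 0
      simpa [iteratedDeriv_zero, hBu] using h
    have hc1 : p.coeff 1 = d1 := by
      have h := hfac B p hp 1
      simpa [iteratedDeriv_one] using h
    have hc2 : p.coeff 2 = d2 / 2 := by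
      have h := hfac B p hp 2
      rw [hi2] at h
      rw [eq_div_iff (two_ne_zero), hd2def, ← h]
      norm_num [Nat.factorial]
      ring
    have hc3 : p.coeff 3 = d3 / 6 := by
      have h := hfac B p hp 3
      rw [hi3] at h
      rw [eq_div_iff (by norm_num : (6:ℂ) ≠ 0), hd3def, ← h]
      norm_num [Nat.factorial]
      ring
    have he0 : q.coeff 0 = d1 := by
      have h := hfac _ q hq 0
      simpa [iteratedDeriv_zero] using h
    have he1 : q.coeff 1 = d2 := by
      have h := hfac _ q hq 1
      simpa [iteratedDeriv_one] using h
    have he2 : q.coeff 2 = d3 / 2 := by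
      have h := hfac _ q hq 2
      rw [show iteratedDeriv 2 (deriv B) = deriv (deriv (deriv B)) by
        rw [iteratedDeriv_succ, iteratedDeriv_one]] at h
      rw [eq_div_iff (two_ne_zero), hd3def, ← h]
      norm_num [Nat.factorial]
      ring
    have hps4 : ∀ y : ℂ, p.partialSum 4 y = 1 + y * d1 + y^2 * (d2/2) + y^3 * (d3/6) := by
      intro y
      simp [FormalMultilinearSeries.partialSum, Finset.sum_range_succ,
        FormalMultilinearSeries.apply_eq_pow_smul_coeff, hc0, hc1, hc2, hc3, smul_eq_mul]
      try ring
    have hqs3 : ∀ y : ℂ, q.partialSum 3 y = d1 + y * d2 + y^2 * (d3/2) := by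
      intro y
      simp [FormalMultilinearSeries.partialSum, Finset.sum_range_succ,
        FormalMultilinearSeries.apply_eq_pow_smul_coeff, he0, he1, he2, smul_eq_mul]
      try ring
    have hjp : Tendsto (fun ε : ℝ => (ε:ℂ) * I) (𝓝 0) (𝓝 0) := by
      exact (Complex.continuous_ofReal.mul continuous_const).tendsto' 0 0 (by simp)
    have hjm : Tendsto (fun ε : ℝ => -((ε:ℂ) * I)) (𝓝 0) (𝓝 0) := by
      exact ((Complex.continuous_ofReal.mul continuous_const).neg).tendsto' 0 0 (by simp)
    have hnp : ∀ (n : ℕ), (fun ε : ℝ => ‖(ε:ℂ) * I‖ ^ n) =O[𝓝 0] fun ε => ε ^ n := by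
      intro n
      apply isBigO_of_le
      intro x
      simp [_root_.abs_pow]
    have hnm : ∀ (n : ℕ), (fun ε : ℝ => ‖-((ε:ℂ) * I)‖ ^ n) =O[𝓝 0] fun ε => ε ^ n := by
      intro n
      apply isBigO_of_le
      intro x
      simp [_root_.abs_pow]
    have hP : (fun ε : ℝ => B ((u:ℂ) + ε * I)
        - (1 + ((ε:ℂ)*I) * d1 + ((ε:ℂ)*I)^2 * (d2/2) + ((ε:ℂ)*I)^3 * (d3/6)))
        =O[𝓝 0] fun ε => ε^4 := by
      have h1 := (hp.isBigO_sub_partialSum_pow 4).comp_tendsto hjp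
      refine IsBigO.trans ?_ (hnp 4)
      refine h1.congr_left fun ε => ?_
      rw [Function.comp_apply, hps4]
    have hM : (fun ε : ℝ => B ((u:ℂ) - ε * I)
        - (1 + (-((ε:ℂ)*I)) * d1 + (-((ε:ℂ)*I))^2 * (d2/2) + (-((ε:ℂ)*I))^3 * (d3/6)))
        =O[𝓝 0] fun ε => ε^4 := by
      have h1 := (hp.isBigO_sub_partialSum_pow 4).comp_tendsto hjm
      refine IsBigO.trans ?_ (hnm 4)
      refine h1.congr_left fun ε => ?_
      rw [Function.comp_apply, hps4, show (u:ℂ) + -((ε:ℂ)*I) = (u:ℂ) - ε*I by ring]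
    have hQp : (fun ε : ℝ => deriv B ((u:ℂ) + ε * I)
        - (d1 + ((ε:ℂ)*I) * d2 + ((ε:ℂ)*I)^2 * (d3/2)))
        =O[𝓝 0] fun ε => ε^3 := by
      have h1 := (hq.isBigO_sub_partialSum_pow 3).comp_tendsto hjp
      refine IsBigO.trans ?_ (hnp 3)
      refine h1.congr_left fun ε => ?_
      rw [Function.comp_apply, hqs3]
    have hQm : (fun ε : ℝ => deriv B ((u:ℂ) - ε * I)
        - (d1 + (-((ε:ℂ)*I)) * d2 + (-((ε:ℂ)*I))^2 * (d3/2)))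
        =O[𝓝 0] fun ε => ε^3 := by
      have h1 := (hq.isBigO_sub_partialSum_pow 3).comp_tendsto hjm
      refine IsBigO.trans ?_ (hnm 3)
      refine h1.congr_left fun ε => ?_
      rw [Function.comp_apply, hqs3, show (u:ℂ) + -((ε:ℂ)*I) = (u:ℂ) - ε*I by ring]
    set Pp : ℝ → ℂ := fun ε => 1 + ((ε:ℂ)*I) * d1 + ((ε:ℂ)*I)^2 * (d2/2) + ((ε:ℂ)*I)^3 * (d3/6)
      with hPp
    set Pm : ℝ → ℂ := fun ε => 1 + (-((ε:ℂ)*I)) * d1 + (-((ε:ℂ)*I))^2 * (d2/2)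
      + (-((ε:ℂ)*I))^3 * (d3/6) with hPm
    set Rp : ℝ → ℂ := fun ε => d1 + ((ε:ℂ)*I) * d2 + ((ε:ℂ)*I)^2 * (d3/2) with hRp
    set Rm : ℝ → ℂ := fun ε => d1 + (-((ε:ℂ)*I)) * d2 + (-((ε:ℂ)*I))^2 * (d3/2) with hRm
    set f1 : ℝ → ℂ := fun ε => B ((u:ℂ) - ε * I) - B ((u:ℂ) + ε * I) with hf1d
    set PD : ℝ → ℂ := fun ε => Pm ε - Pp ε with hPDd
    have hcoe : (fun ε : ℝ => ((ε:ℝ):ℂ)) =O[𝓝 0] fun ε => ε := by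
      apply isBigO_of_le
      intro x
      simp
    have h1 : (fun ε : ℝ => f1 ε - PD ε) =O[𝓝 0] fun ε => ε^4 := by
      have h := hM.sub hP
      refine h.congr_left fun ε => ?_
      simp only [hf1d, hPDd, hPm, hPp]
      ring
    have hε41 : (fun ε : ℝ => ε^4) =O[𝓝 0] fun ε : ℝ => ε := by
      have h := (isLittleO_pow_pow (𝕜 := ℝ) (by norm_num : 1 < 4)).isBigO
      simpa using h
    have hPDO : PD =O[𝓝 0] fun ε : ℝ => ε := by
      have hW : Continuous fun ε : ℝ => (-2*I*d1 - ((ε:ℂ))^2*(Complex.I^3*(d3/3))) :=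
        continuous_const.sub ((Complex.continuous_ofReal.pow 2).mul continuous_const)
      have hWO : (fun ε : ℝ => (-2*I*d1 - ((ε:ℂ))^2*(Complex.I^3*(d3/3)))) =O[𝓝 0]
          (fun _ : ℝ => (1:ℝ)) := (hW.tendsto 0).isBigO_one ℝ
      have h := hcoe.mul hWO
      refine IsBigO.congr h (fun ε => ?_) (fun ε => mul_one ε)
      simp only [hPDd, hPm, hPp]
      ring
    have hsum1 : (fun ε : ℝ => f1 ε + PD ε) =O[𝓝 0] fun ε : ℝ => ε := by
      have h := (h1.trans hε41).add (hPDO.const_mul_left 2)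
      refine h.congr_left fun ε => ?_
      ring
    have hA : (fun ε : ℝ => f1 ε^2 - PD ε^2) =O[𝓝 0] fun ε : ℝ => ε^5 := by
      have h := h1.mul hsum1
      refine h.congr (fun ε => by ring) (fun ε => ?_)
      rw [← pow_succ]
    have hRpO : Rp =O[𝓝 0] (fun _ : ℝ => (1:ℝ)) := by
      have hW : Continuous Rp := by
        rw [hRp]
        exact (continuous_const.add ((Complex.continuous_ofReal.mul continuous_const).mul
          continuous_const)).add
          (((Complex.continuous_ofReal.mul continuous_const).pow 2).mul continuous_const)
      exact (hW.tendsto 0).isBigO_one ℝ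
    have hf3O : (fun ε : ℝ => deriv B ((u:ℂ) - ε * I)) =O[𝓝 0] (fun _ : ℝ => (1:ℝ)) := by
      have hcont : ContinuousAt (deriv B) ((u:ℂ)) := (hB1U _ hUu).continuousAt
      have hpath : Tendsto (fun ε : ℝ => (u:ℂ) - ε * I) (𝓝 0) (𝓝 ((u:ℂ))) := by
        exact (continuous_const.sub (Complex.continuous_ofReal.mul continuous_const)).tendsto' 0 _ (by simp)
      exact (hcont.tendsto.comp hpath).isBigO_one ℝ
    have hprod : (fun ε : ℝ => deriv B ((u:ℂ) + ε * I) * deriv B ((u:ℂ) - ε * I)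
        - Rp ε * Rm ε) =O[𝓝 0] fun ε : ℝ => ε^3 := by
      have hm1 := (hQp.mul hf3O).congr_right (g₂ := fun ε : ℝ => ε^3) (fun x => mul_one _)
      have hm2 := (hRpO.mul hQm).congr_right (g₂ := fun ε : ℝ => ε^3) (fun x => one_mul _)
      refine (hm1.add hm2).congr_left (fun ε => by ring)
    have hsq2 : (fun ε : ℝ => 4*((ε:ℝ):ℂ)^2) =O[𝓝 0] fun ε : ℝ => ε^2 :=
      (hcoe.pow 2).const_mul_left 4
    have hB' : (fun ε : ℝ => 4*((ε:ℝ):ℂ)^2 * (deriv B ((u:ℂ) + ε * I) * deriv B ((u:ℂ) - ε * I))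
        - 4*((ε:ℝ):ℂ)^2 * (Rp ε * Rm ε)) =O[𝓝 0] fun ε : ℝ => ε^5 := by
      have h := hsq2.mul hprod
      refine h.congr (fun ε => by ring) (fun ε => by ring)
    set N : ℝ → ℂ := fun ε => f1 ε^2
        + 4 * (ε:ℂ)^2 * (deriv B ((u:ℂ) + ε * I)) * (deriv B ((u:ℂ) - ε * I)) with hNd
    set Q : ℝ → ℂ := fun ε => PD ε^2 + 4*((ε:ℝ):ℂ)^2 * (Rp ε * Rm ε) with hQd
    have hNQ : (fun ε : ℝ => N ε - Q ε) =O[𝓝 0] fun ε : ℝ => ε^5 := by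
      have h := hA.add hB'
      refine h.congr_left fun ε => ?_
      simp only [hNd, hQd]
      ring
    have hlittle : (fun ε : ℝ => N ε - Q ε) =o[𝓝 0] fun ε : ℝ => ((ε:ℝ):ℂ)^4 := by
      have h5 : (fun ε : ℝ => ε^5) =o[𝓝 0] fun ε : ℝ => ε^4 :=
        isLittleO_pow_pow (by norm_num : 4 < 5)
      have hcast : (fun ε : ℝ => ε^4) =O[𝓝 0] fun ε : ℝ => ((ε:ℝ):ℂ)^4 := by
        apply isBigO_of_le
        intro x
        simp [_root_.abs_pow]
      exact (hNQ.trans_isLittleO h5).trans_isBigO hcast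
    have hzero : Tendsto (fun ε : ℝ => (N ε - Q ε) / ((ε:ℝ):ℂ)^4) (𝓝[≠] (0:ℝ)) (𝓝 0) :=
      (hlittle.tendsto_div_nhds_zero).mono_left nhdsWithin_le_nhds
    have hQdiv : Tendsto (fun ε : ℝ => Q ε / ((ε:ℝ):ℂ)^4) (𝓝[≠] (0:ℝ))
        (𝓝 (4 * d2^2 - 8/3 * d1 * d3)) := by
      have hco : Continuous fun ε : ℝ => (4 * d2^2 - 8/3 * d1 * d3)
          + ((ε:ℝ):ℂ)^2 * (Complex.I^6*d3^2/9 + Complex.I^4*d3^2) :=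
        continuous_const.add ((Complex.continuous_ofReal.pow 2).mul continuous_const)
      have hlim : Tendsto (fun ε : ℝ => (4 * d2^2 - 8/3 * d1 * d3)
          + ((ε:ℝ):ℂ)^2 * (Complex.I^6*d3^2/9 + Complex.I^4*d3^2)) (𝓝[≠] (0:ℝ))
          (𝓝 (4 * d2^2 - 8/3 * d1 * d3)) := by
        have h := (hco.tendsto 0).mono_left (nhdsWithin_le_nhds (s := {(0:ℝ)}ᶜ))
        simpa using h
      refine hlim.congr' ?_
      filter_upwards [self_mem_nhdsWithin] with ε (hε : ε ≠ 0)
      have hεC : ((ε:ℝ):ℂ) ≠ 0 := Complex.ofReal_ne_zero.mpr hε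
      rw [eq_comm, div_eq_iff (pow_ne_zero 4 hεC), eq_comm]
      simp only [hQd, hPDd, hPm, hPp, hRp, hRm]
      linear_combination (-4*((ε:ℝ):ℂ)^2*d1^2 - 8/3*((ε:ℝ):ℂ)^4*d1*d3
        + 4*((ε:ℝ):ℂ)^4*d2^2 - 4/3*((ε:ℝ):ℂ)^4*Complex.I^2*d1*d3) * Complex.I_sq
    have hfin := hQdiv.add hzero
    rw [add_zero] at hfin
    refine hfin.congr fun ε => ?_
    rw [← add_div]
    congr 1
    simp only [hNd, hQd]
    ring
  -- ### Part 5: assembly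
  set G : ℝ → ℂ := fun ε =>
    ((B ((u:ℂ) - ε * I) - B ((u:ℂ) + ε * I))^2
      + 4 * (ε:ℂ)^2 * (deriv B ((u:ℂ) + ε * I)) * (deriv B ((u:ℂ) - ε * I)))
    / (4 * (ε:ℂ)^2 * (B ((u:ℂ) - ε * I) - B ((u:ℂ) + ε * I))^2) with hGdef
  have h16 : (4:ℂ) * (-2 * I * d1)^2 = 16 * (t:ℂ)^2 := by
    rw [hd1]; linear_combination (16 * (t:ℂ)^2 * (Complex.I^2 - 1)) * Complex.I_sq
  have hdenne : (4:ℂ) * (-2 * I * d1)^2 ≠ 0 := by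
    rw [h16]
    exact mul_ne_zero (by norm_num) (pow_ne_zero _ (Complex.ofReal_ne_zero.mpr htne))
  have hden : Tendsto (fun ε : ℝ =>
      (4:ℂ) * ((B ((u:ℂ) - ε * I) - B ((u:ℂ) + ε * I)) / (ε:ℂ))^2)
      (𝓝[≠] (0:ℝ)) (𝓝 ((4:ℂ) * (-2 * I * d1)^2)) := (hD.pow 2).const_mul 4
  have hGlim : Tendsto G (𝓝[≠] (0:ℝ))
      (𝓝 ((4 * d2^2 - 8/3 * d1 * d3) / ((4:ℂ) * (-2 * I * d1)^2))) := by
    refine (hN.div hden hdenne).congr' ?_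
    filter_upwards [self_mem_nhdsWithin] with ε (hε : ε ≠ 0)
    have hεC : ((ε:ℝ):ℂ) ≠ 0 := Complex.ofReal_ne_zero.mpr hε
    by_cases hf : B ((u:ℂ) - ε * I) - B ((u:ℂ) + ε * I) = 0
    · simp [hGdef, hf, hεC]
    · simp only [hGdef, Pi.div_apply]
      rw [div_div, div_pow]
      congr 1
      field_simp
  have hf1ne : ∀ᶠ ε : ℝ in 𝓝[>] (0:ℝ), B ((u:ℂ) - ε * I) - B ((u:ℂ) + ε * I) ≠ 0 := by
    have hne2 : (-2 : ℂ) * I * d1 ≠ 0 := by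
      have hv : (-2:ℂ) * I * d1 = 2 * t := by
        rw [hd1]; linear_combination (-2 * (t:ℂ)) * Complex.I_sq
      rw [hv]
      exact mul_ne_zero (by norm_num) (Complex.ofReal_ne_zero.mpr htne)
    have hD' := hD.mono_left (nhdsWithin_mono 0 (fun x (hx : x ∈ Ioi 0) => hx.ne'))
    filter_upwards [hD'.eventually_ne hne2] with ε hε hcontra
    rw [hcontra] at hε
    simp at hε
  set T : ℝ := 1 / 4 * (t^2 / 3 + 2/3 * (r3 / t) - (s2 / t)^2) with hT
  have hLval : (4 * d2^2 - 8/3 * d1 * d3) / ((4:ℂ) * (-2 * I * d1)^2) = ((T:ℝ):ℂ) := by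
    have hnum : 4 * d2^2 - 8/3 * d1 * d3
        = ((-4 * s2^2 + 4/3 * t^4 + 8/3 * t * r3 : ℝ) : ℂ) := by
      rw [hd2, hd3, hd1]
      push_cast
      linear_combination (4 * (s2:ℂ)^2 - 8/3 * (t:ℂ) * (r3:ℂ) + 8/3 * (t:ℂ)^4) * Complex.I_sq
    have hTval : T = (-4 * s2^2 + 4/3 * t^4 + 8/3 * t * r3) / (16 * t^2) := by
      rw [hT]; field_simp; ring
    rw [hnum, h16, hTval]
    push_cast
    ring
  have hGlimT : Tendsto G (𝓝[>] (0:ℝ)) (𝓝 ((T:ℝ):ℂ)) := by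
    rw [← hLval]
    exact hGlim.mono_left (nhdsWithin_mono 0 (fun x (hx : x ∈ Ioi 0) => hx.ne'))
  have hre : Tendsto (fun ε : ℝ => (G ε).re) (𝓝[>] (0:ℝ)) (𝓝 T) := by
    have h := (Complex.continuous_re.tendsto ((T:ℝ):ℂ)).comp hGlimT
    simpa [Function.comp_def] using h
  refine Tendsto.congr' ?_ hre
  have habs_small : ∀ᶠ ε : ℝ in 𝓝[>] (0:ℝ), |ε| < r := by
    have h1 : ∀ᶠ ε : ℝ in 𝓝 (0:ℝ), |ε| < r := by
      have h := (_root_.continuous_abs.tendsto (0:ℝ))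
      rw [abs_zero] at h
      exact h.eventually_lt_const hr0
    exact h1.filter_mono nhdsWithin_le_nhds
  filter_upwards [self_mem_nhdsWithin, habs_small, hf1ne] with ε hε hεr hf1
  obtain ⟨hBw0, hcz, hcz'⟩ := hrefl ε hεr
  have hεne : (ε:ℝ) ≠ 0 := (mem_Ioi.mp hε).ne'
  have hεC : ((ε:ℝ):ℂ) ≠ 0 := Complex.ofReal_ne_zero.mpr hεne
  have habs2 : ∀ ζ : ℂ, ((‖ζ‖ : ℝ) : ℂ)^2 = ζ * (starRingEnd ℂ) ζ := fun ζ => by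
    rw [← Complex.ofReal_pow, Complex.sq_norm, Complex.mul_conj]
  have hC : ((1 / (4 * ε^2) -
      (‖deriv B ((u:ℂ) + ε * I)‖)^2 /
        (1 - (‖B ((u:ℂ) + ε * I)‖)^2)^2 : ℝ) : ℂ) = G ε := by
    have key : ∀ a b c e z : ℂ, a ≠ 0 → a - b ≠ 0 → z ≠ 0 →
        1/(4*z^2) - c * (-e/a^2) / (1 - b*a⁻¹)^2
        = ((a - b)^2 + 4*z^2*c*e)/(4*z^2*(a-b)^2) := by
      intro a b c e z ha hab hz
      field_simp
      ring
    push_cast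
    rw [habs2, habs2, hcz, hcz']
    simp only [hGdef]
    exact key _ _ _ _ _ hBw0 hf1 hεC
  rw [← hC]
  exact Complex.ofReal_re _
end

section
/- If θ(u) = b·u with b > 0 (linear phase function), then the curvature function ω(u) = (1/4)[ (θ')²/3 + (2/3)θ'''/θ' - (θ''/θ')² ] is the constant b²/12. Conversely, if θ : ℝ → ℝ is C³ with θ' > 0 and ω(u) is constant equal to c > 0, and additionally θ''(0) = 0, θ'(0) = √(12c), then θ(u) = θ(0) + √(12c)·u. -/
open Real

/-- (1) A linear phase `θ(u) = b u` with `b > 0` has constant curvature function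
`ω(u) = b²/12`. (2) Conversely, a `C³` phase with positive derivative, constant
curvature `c > 0`, and initial data `θ''(0) = 0`, `θ'(0) = √(12c)` is linear:
`θ(u) = θ(0) + √(12c) u`. -/
theorem stmt15 :
    (∀ b : ℝ, 0 < b → ∀ θ : ℝ → ℝ, θ = (fun u => b * u) →
      ∀ u : ℝ,
        (1 / 4) * ((deriv θ u)^2 / 3
          + (2 / 3) * (deriv (deriv (deriv θ)) u / deriv θ u)
          - (deriv (deriv θ) u / deriv θ u)^2) = b^2 / 12) ∧
    (∀ (θ : ℝ → ℝ) (c : ℝ), 0 < c → ContDiff ℝ 3 θ → (∀ u, 0 < deriv θ u) →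
      (∀ u : ℝ,
        (1 / 4) * ((deriv θ u)^2 / 3
          + (2 / 3) * (deriv (deriv (deriv θ)) u / deriv θ u)
          - (deriv (deriv θ) u / deriv θ u)^2) = c) →
      deriv (deriv θ) 0 = 0 → deriv θ 0 = Real.sqrt (12 * c) →
      ∀ u : ℝ, θ u = θ 0 + Real.sqrt (12 * c) * u) := by
  constructor
  · intro b hb θ hθ u
    subst hθ
    have h1 : deriv (fun u : ℝ => b*u) = fun _ => b := by
      funext x
      have := ((hasDerivAt_id x).const_mul b).deriv
      simpa using this
    rw [h1, deriv_const']
    simp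
    ring
  · intro θ c hc hθ hpos hω h2 h1 u
    set f := deriv θ with hfdef
    set g := deriv f with hgdef
    have hf2 : ContDiff ℝ 2 f :=
      (contDiff_succ_iff_deriv.mp (show ContDiff ℝ (2+1) θ from hθ)).2.2
    have hg1 : ContDiff ℝ 1 g :=
      (contDiff_succ_iff_deriv.mp (show ContDiff ℝ (1+1) f from hf2)).2.2
    have hdf : Differentiable ℝ f := hf2.differentiable (by norm_num)
    have hdg : Differentiable ℝ g := hg1.differentiable (by norm_num)
    set s := Real.sqrt (12*c) with hsdef
    have hs0 : 0 < s := Real.sqrt_pos.mpr (by linarith)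
    have hs2 : s^2 = 12*c := Real.sq_sqrt (by linarith)
    have hode : ∀ v, 2 * deriv g v * (f v)^2 = 12*c*(f v)^3 - (f v)^5 + 3*(g v)^2 * f v := by
      intro v
      have h := hω v
      have hfu : f v ≠ 0 := (hpos v).ne'
      field_simp at h
      linear_combination (f v) * h
    set E : ℝ → ℝ := fun v => (g v)^2/(f v)^3 + 12*c/(f v) + f v with hEdef
    have hE' : ∀ v, HasDerivAt E 0 v := by
      intro v
      have hfu : f v ≠ 0 := (hpos v).ne'
      have hF : HasDerivAt f (g v) v := (hdf v).hasDerivAt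
      have hG : HasDerivAt g (deriv g v) v := (hdg v).hasDerivAt
      have t1 := (hG.pow 2).div (hF.pow 3) (pow_ne_zero 3 hfu)
      have t2 := (hasDerivAt_const v (12*c)).div hF hfu
      have t3 := (t1.add t2).add hF
      refine t3.congr_deriv ?_
      symm
      have hd := hode v
      push_cast
      simp only [Pi.pow_apply]
      field_simp
      ring_nf
      ring_nf at hd
      linear_combination (-(g v)) * (mul_left_cancel₀ hfu (by linear_combination hd : f v * (deriv g v * f v * 2) = f v * (g v ^ 2 * 3 + f v ^ 2 * c * 12 - f v ^ 4)))
    have hEc : ∀ v, E v = E 0 :=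
      fun v => is_const_of_deriv_eq_zero (fun x => (hE' x).differentiableAt)
        (fun x => (hE' x).deriv) v 0
    have hE0 : E 0 = 2*s := by
      have hg0 : g 0 = 0 := h2
      have hf0 : f 0 = s := h1
      simp only [hEdef, hg0, hf0]
      field_simp
      nlinarith [hs2]
    have hfs : ∀ v, f v = s := by
      intro v
      have hE := (hEc v).trans hE0
      have hfu : 0 < f v := hpos v
      have key : (g v)^2 + (f v)^2*(f v - s)^2 = 0 := by
        have h' : (g v)^2 + 12*c*(f v)^2 + (f v)^4 = 2*s*(f v)^3 := by
          have := hE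
          simp only [hEdef] at this
          field_simp at this
          nlinarith [this]
        nlinarith [h', hs2]
      have hz : (f v)^2*(f v - s)^2 = 0 := by nlinarith [sq_nonneg (g v), sq_nonneg (f v*(f v - s))]
      have := mul_eq_zero.mp hz
      rcases this with h | h
      · exact absurd (pow_eq_zero_iff (by norm_num) |>.mp h) hfu.ne'
      · have := pow_eq_zero_iff (n := 2) (by norm_num) |>.mp h
        linarith [sub_eq_zero.mp this]
    have hdθ : Differentiable ℝ θ := hθ.differentiable (by norm_num)
    have hφ : ∀ x, HasDerivAt (fun x => θ x - s*x) 0 x := by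
      intro x
      have h5 : deriv θ x = s := hfs x
      have := (hdθ x).hasDerivAt.sub ((hasDerivAt_id x).const_mul s)
      exact (by simpa [h5] using this : HasDerivAt (θ - fun y => s*y) 0 x)
    have := is_const_of_deriv_eq_zero (f := fun x => θ x - s*x)
      (fun x => (hφ x).differentiableAt) (fun x => (hφ x).deriv) u 0
    simp at this
    linarith [this]
end

section
/- Let b ≥ 0, γ ∈ ℂ with |γ| = 1, and (λ_k)_{k=1}^N (N finite or infinite) a sequence in the open upper half-plane with no finite accumulation point and satisfying ∑_k Im(λ_k)/|λ_k|² < ∞ (all λ_k ≠ 0). Then the product B(λ) = γ·e^{ibλ}·∏_k (conj(λ_k)/λ_k)·(λ-λ_k)/(λ-conj(λ_k)) converges locally uniformly on ℂ minus the closure of {conj(λ_k)} to a meromorphic function on ℂ satisfying |B(u)| = 1 for all u ∈ ℝ not a pole, and |B(λ)| < 1 for Im λ > 0 (assuming b > 0 or N ≥ 1). -/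
open Complex Filter Topology

/-- product minus one bound -/
lemma blaschke_prod_sub_one_bound (s : Finset ℕ) (g : ℕ → ℂ) (u : ℕ → ℝ)
    (h : ∀ i ∈ s, ‖g i - 1‖ ≤ u i) :
    ‖(∏ i ∈ s, g i) - 1‖ ≤ (∏ i ∈ s, (1 + u i)) - 1 := by
  classical
  induction s using Finset.induction_on with
  | empty => simp
  | @insert a s' ha ih =>
    have hu : ∀ i ∈ s', ‖g i - 1‖ ≤ u i :=
      fun i hi => h i (Finset.mem_insert_of_mem hi)
    have hga : ‖g a - 1‖ ≤ u a := h a (Finset.mem_insert_self a s')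
    have hua : 0 ≤ u a := le_trans (norm_nonneg _) hga
    rw [Finset.prod_insert ha, Finset.prod_insert ha]
    have key : g a * ∏ i ∈ s', g i - 1 = g a * ((∏ i ∈ s', g i) - 1) + (g a - 1) := by ring
    have hger : ‖g a‖ ≤ 1 + u a := by
      have h2 : ‖g a‖ ≤ ‖(1:ℂ)‖ + ‖g a - 1‖ := by
        simpa using norm_add_le 1 (g a - 1)
      simp only [norm_one] at h2; linarith
    calc ‖g a * ∏ i ∈ s', g i - 1‖
        ≤ ‖g a‖ * ‖(∏ i ∈ s', g i) - 1‖ + ‖g a - 1‖ := by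
          rw [key]
          exact le_trans (norm_add_le _ _) (by rw [norm_mul])
      _ ≤ (1 + u a) * ((∏ i ∈ s', (1 + u i)) - 1) + u a := by
          apply add_le_add _ hga
          exact mul_le_mul hger (ih hu) (norm_nonneg _) (by linarith)
      _ = (1 + u a) * ∏ i ∈ s', (1 + u i) - 1 := by ring

lemma blaschke_prod_one_add_le_exp (s : Finset ℕ) (u : ℕ → ℝ) (hu : ∀ i, 0 ≤ u i) :
    (∏ i ∈ s, (1 + u i)) ≤ Real.exp (∑ i ∈ s, u i) := by
  rw [Real.exp_sum]
  exact Finset.prod_le_prod (fun i _ => by linarith [hu i]) (fun i _ => by linarith [Real.add_one_le_exp (u i)])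

lemma blaschke_abs_prod_le (s : Finset ℕ) (g : ℕ → ℂ) (u : ℕ → ℝ) (hu : ∀ i, 0 ≤ u i)
    (h : ∀ i ∈ s, ‖g i - 1‖ ≤ u i) :
    ‖∏ i ∈ s, g i‖ ≤ Real.exp (∑ i ∈ s, u i) := by
  have h1 : ‖∏ i ∈ s, g i‖ ≤ ‖(∏ i ∈ s, g i) - 1‖ + 1 := by
    have := norm_add_le ((∏ i ∈ s, g i) - 1) 1
    simpa using this
  have h2 := blaschke_prod_sub_one_bound s g u h
  have h3 := blaschke_prod_one_add_le_exp s u hu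
  linarith

lemma blaschke_uniform_cauchy {f : ℕ → ℂ → ℂ} {u : ℕ → ℝ} {K : Set ℂ}
    (hsum : Summable u) (hu0 : ∀ k, 0 ≤ u k)
    (hb : ∀ k, ∀ z ∈ K, ‖f k z - 1‖ ≤ u k) :
    UniformCauchySeqOn (fun n z => ∏ k ∈ Finset.range n, f k z) atTop K := by
  set s : ℕ → ℝ := fun n => ∑ k ∈ Finset.range n, u k with hs
  set e : ℕ → ℝ := fun n => Real.exp (s n) with he
  have hse : Tendsto s atTop (𝓝 (∑' k, u k)) := hsum.hasSum.tendsto_sum_nat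
  have hec : CauchySeq e :=
    ((Real.continuous_exp.tendsto _).comp hse).cauchySeq
  rw [Metric.uniformCauchySeqOn_iff]
  intro ε hε
  obtain ⟨N, hN⟩ := Metric.cauchySeq_iff.mp hec ε hε
  refine ⟨N, fun m hm n hn z hz => ?_⟩
  -- key estimate
  have key : ∀ p q : ℕ, p ≤ q →
      ‖(∏ k ∈ Finset.range q, f k z) - ∏ k ∈ Finset.range p, f k z‖ ≤ e q - e p := by
    intro p q hpq
    have hsplit : (∏ k ∈ Finset.range q, f k z)
        = (∏ k ∈ Finset.range p, f k z) * ∏ k ∈ Finset.Ico p q, f k z :=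
      (Finset.prod_range_mul_prod_Ico _ hpq).symm
    have h1 : ‖∏ k ∈ Finset.range p, f k z‖ ≤ Real.exp (s p) :=
      blaschke_abs_prod_le _ _ u hu0 (fun i _ => hb i z hz)
    have h2 : ‖(∏ k ∈ Finset.Ico p q, f k z) - 1‖
        ≤ (∏ i ∈ Finset.Ico p q, (1 + u i)) - 1 :=
      blaschke_prod_sub_one_bound _ _ u (fun i _ => hb i z hz)
    have h3 : (∏ i ∈ Finset.Ico p q, (1 + u i)) ≤ Real.exp (∑ i ∈ Finset.Ico p q, u i) :=
      blaschke_prod_one_add_le_exp _ u hu0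
    have h4 : s p + ∑ i ∈ Finset.Ico p q, u i = s q := Finset.sum_range_add_sum_Ico _ hpq
    calc ‖(∏ k ∈ Finset.range q, f k z) - ∏ k ∈ Finset.range p, f k z‖
        = ‖∏ k ∈ Finset.range p, f k z‖
            * ‖(∏ k ∈ Finset.Ico p q, f k z) - 1‖ := by
          rw [hsplit, ← norm_mul]; ring_nf
      _ ≤ Real.exp (s p) * ((∏ i ∈ Finset.Ico p q, (1 + u i)) - 1) := by
          apply mul_le_mul h1 h2 (norm_nonneg _)
          exact Real.exp_nonneg _
      _ ≤ Real.exp (s p) * (Real.exp (∑ i ∈ Finset.Ico p q, u i) - 1) := by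
          have := Real.exp_pos (s p); nlinarith
      _ = e q - e p := by
          rw [he]; simp only []
          rw [← h4, Real.exp_add]; ring
  have hd := hN m hm n hn
  rw [Real.dist_eq] at hd
  rw [dist_eq_norm]
  rcases le_total n m with h | h
  · have := key n m h
    calc ‖(∏ k ∈ Finset.range m, f k z) - ∏ k ∈ Finset.range n, f k z‖ ≤ e m - e n := this
      _ ≤ |e m - e n| := le_abs_self _
      _ < ε := hd
  · have := key m n h
    rw [norm_sub_rev]
    calc ‖(∏ k ∈ Finset.range n, f k z) - ∏ k ∈ Finset.range m, f k z‖ ≤ e n - e m := this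
      _ ≤ |e n - e m| := le_abs_self _
      _ < ε := by rwa [abs_sub_comm] at hd

lemma blaschke_factor_sub_one (l z : ℂ) (hl : l ≠ 0) (hil : 0 < l.im)
    (hz : z - (starRingEnd ℂ) l ≠ 0) :
    ‖((starRingEnd ℂ) l / l) * ((z - l) / (z - (starRingEnd ℂ) l)) - 1‖
      = (‖z‖ * (2 * l.im)) / (‖l‖ * ‖z - (starRingEnd ℂ) l‖) := by
  have key : ((starRingEnd ℂ) l / l) * ((z - l) / (z - (starRingEnd ℂ) l)) - 1
      = (z * ((starRingEnd ℂ) l - l)) / (l * (z - (starRingEnd ℂ) l)) := by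
    field_simp
    ring
  rw [key, norm_div, norm_mul, norm_mul]
  have h2 : (starRingEnd ℂ) l - l = (↑(-(2 * l.im)) : ℂ) * Complex.I := by
    apply Complex.ext <;> simp <;> ring
  rw [h2, norm_mul, Complex.norm_I, Complex.norm_real, Real.norm_eq_abs, mul_one, abs_of_neg (by linarith)]
  ring_nf

lemma blaschke_im_lt (l z : ℂ) (hil : 0 < l.im) (hiz : 0 < z.im) :
    ‖z - l‖ < ‖z - (starRingEnd ℂ) l‖ := by
  apply lt_of_pow_lt_pow_left₀ 2 (norm_nonneg _)
  rw [Complex.sq_norm, Complex.sq_norm]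
  simp only [Complex.normSq_apply, Complex.sub_re, Complex.sub_im, Complex.conj_re,
    Complex.conj_im]
  nlinarith

lemma blaschke_factor_lt_one (l z : ℂ) (hl : l ≠ 0) (hil : 0 < l.im) (hiz : 0 < z.im) :
    ‖((starRingEnd ℂ) l / l) * ((z - l) / (z - (starRingEnd ℂ) l))‖ < 1 := by
  have hz : z - (starRingEnd ℂ) l ≠ 0 := by
    intro h
    have := congrArg Complex.im h
    simp [Complex.conj_im] at this
    nlinarith [this]
  rw [norm_mul, norm_div, norm_div, Complex.norm_conj, div_self (by simpa using hl), one_mul]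
  rw [div_lt_one (by simpa [norm_pos_iff] using hz)]
  exact blaschke_im_lt l z hil hiz

lemma blaschke_compact_bound (lam : ℕ → ℂ) (him : ∀ k, 0 < (lam k).im) (hne : ∀ k, lam k ≠ 0)
    (K : Set ℂ) (hK : IsCompact K) (hKne : K.Nonempty)
    (hKS : K ⊆ (closure (Set.range fun k => (starRingEnd ℂ) (lam k)))ᶜ) :
    ∃ C : ℝ, 0 ≤ C ∧ ∀ k, ∀ z ∈ K,
      ‖((starRingEnd ℂ) (lam k) / lam k)
          * ((z - lam k) / (z - (starRingEnd ℂ) (lam k))) - 1‖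
        ≤ C * ((lam k).im / (‖lam k‖)^2) := by
  obtain ⟨z₀, hz₀, hmax⟩ := hK.exists_isMaxOn hKne continuous_norm.continuousOn
  set R : ℝ := max (‖z₀‖) 1 with hRdef
  have hR1 : (1:ℝ) ≤ R := le_max_right _ _
  have hR : ∀ z ∈ K, ‖z‖ ≤ R := fun z hz => le_trans (hmax hz) (le_max_left _ _)
  set Cl : Set ℂ := closure (Set.range fun k => (starRingEnd ℂ) (lam k)) with hCl
  have hClne : Cl.Nonempty := ⟨(starRingEnd ℂ) (lam 0), subset_closure ⟨0, rfl⟩⟩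
  have hClclosed : IsClosed Cl := isClosed_closure
  obtain ⟨w₀, hw₀, hmin⟩ := hK.exists_isMinOn hKne (Metric.continuous_infDist_pt Cl).continuousOn
  set δ : ℝ := Metric.infDist w₀ Cl with hδdef
  have hδpos : 0 < δ := (hClclosed.notMem_iff_infDist_pos hClne).mp (hKS hw₀)
  have hδ : ∀ z ∈ K, ∀ k, δ ≤ ‖z - (starRingEnd ℂ) (lam k)‖ := by
    intro z hz k
    calc δ ≤ Metric.infDist z Cl := hmin hz
      _ ≤ dist z ((starRingEnd ℂ) (lam k)) :=
          Metric.infDist_le_dist_of_mem (subset_closure ⟨k, rfl⟩)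
      _ = ‖z - (starRingEnd ℂ) (lam k)‖ := Complex.dist_eq _ _
  refine ⟨4*R + 4*R^2/δ, by positivity, fun k z hz => ?_⟩
  have hA : 0 < ‖lam k‖ := norm_pos_iff.mpr (hne k)
  have hy : 0 < (lam k).im := him k
  have hzk : z - (starRingEnd ℂ) (lam k) ≠ 0 := by
    intro h
    have := hδ z hz k
    rw [h] at this
    simp at this
    linarith
  have hD : 0 < ‖z - (starRingEnd ℂ) (lam k)‖ := norm_pos_iff.mpr hzk
  rw [blaschke_factor_sub_one (lam k) z (hne k) hy hzk]
  set A := ‖lam k‖ with hAdef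
  set D := ‖z - (starRingEnd ℂ) (lam k)‖ with hDdef
  set y := (lam k).im with hydef
  have hzR : ‖z‖ ≤ R := hR z hz
  have hδD : δ ≤ D := hδ z hz k
  have hc : 0 ≤ 4*R^2/δ := by positivity
  have hA2 : (y / A^2) * (A*D) = y*D/A := by field_simp
  rw [div_le_iff₀ (by positivity), mul_assoc, hA2, ← mul_div_assoc, le_div_iff₀ hA]
  rcases le_or_gt (2*R) A with hcase | hcase
  · have hAD : A - R ≤ D := by
      have h1 : ‖(starRingEnd ℂ) (lam k)‖ - ‖z‖ ≤ ‖z - (starRingEnd ℂ) (lam k)‖ := by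
        rw [norm_sub_rev]; exact norm_sub_norm_le _ _
      rw [Complex.norm_conj] at h1
      linarith
    nlinarith [mul_nonneg (mul_nonneg hc hy.le) hD.le,
      mul_nonneg (sub_nonneg.mpr hzR) (mul_pos hy hA).le,
      mul_nonneg (mul_nonneg (by linarith : (0:ℝ) ≤ R) hy.le) (by linarith : (0:ℝ) ≤ 2*D - A)]
  · have hcδ : (4*R^2/δ)*δ = 4*R^2 := div_mul_cancel₀ _ hδpos.ne'
    nlinarith [mul_nonneg (mul_nonneg hc hy.le) (sub_nonneg.mpr hδD),
      mul_nonneg (mul_nonneg hy.le hA.le) (sub_nonneg.mpr hzR),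
      mul_nonneg (mul_nonneg hy.le (le_trans zero_le_one hR1)) (by linarith : (0:ℝ) ≤ 2*R - A),
      mul_nonneg (mul_nonneg (by linarith : (0:ℝ) ≤ 4*R) hy.le) hD.le]


/-- Convergence of the Blaschke product for the upper half-plane: under the Blaschke
condition, the partial products of
`B(λ) = γ e^{ibλ} ∏_k (conj λ_k / λ_k)(λ - λ_k)/(λ - conj λ_k)`
converge locally uniformly on the complement of the closure of `{conj λ_k}` to a
holomorphic function there which is unimodular on `ℝ` (off the poles) and of modulus
`< 1` on the upper half-plane. -/
theorem stmt18 (b : ℝ) (hb : 0 ≤ b) (γ : ℂ) (hγ : ‖γ‖ = 1)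
    (lam : ℕ → ℂ) (him : ∀ k, 0 < (lam k).im) (hne : ∀ k, lam k ≠ 0)
    (hacc : Tendsto (fun k => ‖lam k‖) atTop atTop)
    (hBl : Summable (fun k => (lam k).im / ‖lam k‖^2))
    (S : Set ℂ)
    (hS : S = (closure (Set.range fun k => (starRingEnd ℂ) (lam k)))ᶜ) :
    ∃ B : ℂ → ℂ,
      TendstoLocallyUniformlyOn
        (fun (n : ℕ) (z : ℂ) =>
          γ * Complex.exp (Complex.I * b * z) *
            ∏ k ∈ Finset.range n,
              ((starRingEnd ℂ) (lam k) / lam k) *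
                ((z - lam k) / (z - (starRingEnd ℂ) (lam k))))
        B atTop S ∧
      DifferentiableOn ℂ B S ∧
      (∀ u : ℝ, (u : ℂ) ∈ S → ‖B (u : ℂ)‖ = 1) ∧
      (∀ z : ℂ, 0 < z.im → ‖B z‖ < 1) := by
  classical
  set f : ℕ → ℂ → ℂ := fun k z =>
    ((starRingEnd ℂ) (lam k) / lam k) * ((z - lam k) / (z - (starRingEnd ℂ) (lam k))) with hf
  set g : ℂ → ℂ := fun z => γ * Complex.exp (Complex.I * b * z) with hg
  set Q : ℕ → ℂ → ℂ := fun n z => ∏ k ∈ Finset.range n, f k z with hQ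
  have hSopen : IsOpen S := by rw [hS]; exact isClosed_closure.isOpen_compl
  have hSne : ∀ z ∈ S, ∀ k, z - (starRingEnd ℂ) (lam k) ≠ 0 := by
    intro z hz k h
    rw [hS] at hz
    have hzz : z = (starRingEnd ℂ) (lam k) := by
      have := sub_eq_zero.mp h; exact this
    exact hz (subset_closure ⟨k, hzz.symm⟩)
  have hgd : Differentiable ℂ g := by
    apply (differentiable_const γ).mul
    exact (differentiable_id.const_mul (Complex.I * (b:ℂ))).cexp
  have hQabs : ∀ n w, ‖Q n w‖ = ∏ k ∈ Finset.range n, ‖f k w‖ :=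
    fun n w => norm_prod _ _
  -- uniform Cauchy on compacts
  have hUC : ∀ K : Set ℂ, K ⊆ S → IsCompact K → K.Nonempty →
      UniformCauchySeqOn Q atTop K := by
    intro K hKS hK hKne
    obtain ⟨C, hC0, hCb⟩ := blaschke_compact_bound lam him hne K hK hKne (hS ▸ hKS)
    exact blaschke_uniform_cauchy (hBl.mul_left C)
      (fun k => mul_nonneg hC0 (div_nonneg (him k).le (by positivity)))
      (fun k z hz => hCb k z hz)
  have hQcauchy : ∀ z ∈ S, CauchySeq (fun n => Q n z) := by
    intro z hz
    have h1 := hUC {z} (by simpa using hz) isCompact_singleton ⟨z, rfl⟩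
    rw [Metric.uniformCauchySeqOn_iff] at h1
    rw [Metric.cauchySeq_iff]
    intro ε hε
    obtain ⟨N, hN⟩ := h1 ε hε
    exact ⟨N, fun m hm n hn => hN m hm n hn z rfl⟩
  set Qinf : ℂ → ℂ := fun z => limUnder atTop (fun n => Q n z) with hQinf
  have hQtend : ∀ z ∈ S, Tendsto (fun n => Q n z) atTop (𝓝 (Qinf z)) :=
    fun z hz => (hQcauchy z hz).tendsto_limUnder
  have htend : ∀ z ∈ S, Tendsto (fun n => g z * Q n z) atTop (𝓝 (g z * Qinf z)) :=
    fun z hz => (hQtend z hz).const_mul (g z)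
  -- the locally uniform convergence
  have hTLU : TendstoLocallyUniformlyOn (fun n z => g z * Q n z)
      (fun z => g z * Qinf z) atTop S := by
    rw [tendstoLocallyUniformlyOn_iff_forall_isCompact hSopen]
    intro K hKS hK
    rcases K.eq_empty_or_nonempty with rfl | hKne
    · intro u hu
      filter_upwards with n x hx
      exact absurd hx (Set.notMem_empty x)
    · have htuQ : TendstoUniformlyOn Q Qinf atTop K :=
        (hUC K hKS hK hKne).tendstoUniformlyOn_of_tendsto
          (fun z hz => hQtend z (hKS hz))
      have hCg : ∃ Cg : ℝ, 0 ≤ Cg ∧ ∀ z ∈ K, ‖g z‖ ≤ Cg := by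
        obtain ⟨z₀, hz₀, hmax⟩ := hK.exists_isMaxOn hKne
          (continuous_norm.comp hgd.continuous).continuousOn
        exact ⟨‖g z₀‖, norm_nonneg _, fun z hz => hmax hz⟩
      obtain ⟨Cg, hCg0, hCgb⟩ := hCg
      rw [Metric.tendstoUniformlyOn_iff]
      intro ε hε
      filter_upwards [Metric.tendstoUniformlyOn_iff.mp htuQ (ε/(Cg+1)) (by positivity)]
        with n hn z hz
      have h1 : dist (g z * Qinf z) (g z * Q n z)
          = ‖g z‖ * dist (Qinf z) (Q n z) := by
        rw [Complex.dist_eq, Complex.dist_eq, ← norm_mul, ← mul_sub]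
      rw [h1]
      have h2 := hn z hz
      have h3 := hCgb z hz
      have h4 : (0:ℝ) ≤ dist (Qinf z) (Q n z) := dist_nonneg
      have h5 : ‖g z‖ * dist (Qinf z) (Q n z) ≤ Cg * (ε/(Cg+1)) := by
        apply mul_le_mul h3 h2.le h4 hCg0
      have h6 : Cg * (ε/(Cg+1)) < ε := by
        rw [mul_div_assoc'] at *
        rw [div_lt_iff₀ (by positivity)]
        nlinarith
      linarith
  -- differentiability of the partials
  have hfd : ∀ k, DifferentiableOn ℂ (fun z => f k z) S := by
    intro k
    apply (differentiableOn_const _).mul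
    exact (differentiableOn_id.sub (differentiableOn_const _)).div
      (differentiableOn_id.sub (differentiableOn_const _)) (fun z hz => hSne z hz k)
  have hQd : ∀ n, DifferentiableOn ℂ (fun z => Q n z) S := by
    intro n
    induction n with
    | zero => simpa [hQ] using differentiableOn_const (1:ℂ)
    | succ n ih =>
      have : (fun z => Q (n+1) z) = fun z => Q n z * f n z := by
        funext z
        rw [hQ]
        exact Finset.prod_range_succ _ _
      rw [this]
      exact ih.mul (hfd n)
  -- unimodularity of the factors on ℝ
  have habsf : ∀ (u : ℝ), (u:ℂ) ∈ S → ∀ k, ‖f k (u:ℂ)‖ = 1 := by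
    intro u hu k
    have hnum : (u:ℂ) - lam k ≠ 0 := by
      intro h
      have := congrArg Complex.im h
      simp at this
      exact absurd this.symm (him k).ne
    have hden : ‖(u:ℂ) - (starRingEnd ℂ) (lam k)‖ = ‖(u:ℂ) - lam k‖ := by
      rw [← Complex.norm_conj ((u:ℂ) - lam k)]
      congr 1
      rw [map_sub, Complex.conj_ofReal]
    rw [hf]
    simp only [norm_mul, norm_div, Complex.norm_conj, hden]
    rw [div_self (by simpa using hne k), div_self (by simpa [sub_eq_zero] using (norm_ne_zero_iff.mpr hnum)), one_mul]
  have habsg : ∀ (u : ℝ), ‖g (u:ℂ)‖ = 1 := by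
    intro u
    rw [hg]
    simp only [norm_mul, hγ, one_mul, Complex.norm_exp]
    have : (Complex.I * (b:ℂ) * (u:ℂ)).re = 0 := by simp
    rw [this, Real.exp_zero]
  refine ⟨fun z => g z * Qinf z, hTLU, ?_, ?_, ?_⟩
  · -- differentiability
    apply hTLU.differentiableOn _ hSopen
    filter_upwards with n
    exact (hgd.differentiableOn).mul (hQd n)
  · -- unimodular on ℝ
    intro u hu
    have habs : Tendsto (fun n => ‖g (u:ℂ) * Q n (u:ℂ)‖) atTop
        (𝓝 (‖g (u:ℂ) * Qinf (u:ℂ)‖)) :=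
      (continuous_norm.tendsto _).comp (htend (u:ℂ) hu)
    have hone : ∀ n, ‖g (u:ℂ) * Q n (u:ℂ)‖ = 1 := by
      intro n
      rw [norm_mul, habsg u, one_mul, hQabs]
      rw [Finset.prod_congr rfl (fun k _ => habsf u hu k)]
      simp
    simp only [hone] at habs
    exact tendsto_nhds_unique habs tendsto_const_nhds
  · -- modulus < 1 on the upper half-plane
    intro z hzim
    have hzS : z ∈ S := by
      rw [hS]
      intro hmem
      have hsub : (Set.range fun k => (starRingEnd ℂ) (lam k)) ⊆ {w : ℂ | w.im ≤ 0} := by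
        rintro _ ⟨k, rfl⟩
        simp only [Set.mem_setOf_eq, Complex.conj_im]
        linarith [him k]
      have hcl : closure (Set.range fun k => (starRingEnd ℂ) (lam k)) ⊆ {w : ℂ | w.im ≤ 0} :=
        closure_minimal hsub (isClosed_le Complex.continuous_im continuous_const)
      have : z.im ≤ 0 := hcl hmem
      linarith
    have hflt : ∀ k, ‖f k z‖ < 1 :=
      fun k => blaschke_factor_lt_one (lam k) z (hne k) (him k) hzim
    have habs : Tendsto (fun n => ‖g z * Q n z‖) atTop
        (𝓝 (‖g z * Qinf z‖)) :=
      (continuous_norm.tendsto _).comp (htend z hzS)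
    have hgle : ‖g z‖ ≤ 1 := by
      rw [hg]
      simp only [norm_mul, hγ, one_mul, Complex.norm_exp]
      rw [Real.exp_le_one_iff]
      have : (Complex.I * (b:ℂ) * z).re = -(b * z.im) := by
        simp [Complex.mul_re]
      rw [this]
      nlinarith
    have hbnd : ∀ n, 1 ≤ n → ‖g z * Q n z‖ ≤ ‖f 0 z‖ := by
      intro n hn
      have hsplit : (∏ k ∈ Finset.range 1, ‖f k z‖)
          * ∏ k ∈ Finset.Ico 1 n, ‖f k z‖
          = ∏ k ∈ Finset.range n, ‖f k z‖ :=
        Finset.prod_range_mul_prod_Ico _ hn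
      have hIco : (∏ k ∈ Finset.Ico 1 n, ‖f k z‖) ≤ 1 :=
        Finset.prod_le_one (fun i _ => norm_nonneg _) (fun i _ => (hflt i).le)
      have hQle : ‖Q n z‖ ≤ ‖f 0 z‖ := by
        rw [hQabs, ← hsplit, Finset.prod_range_one]
        exact mul_le_of_le_one_right (norm_nonneg _) hIco
      calc ‖g z * Q n z‖ = ‖g z‖ * ‖Q n z‖ := norm_mul _ _
        _ ≤ 1 * ‖f 0 z‖ :=
            mul_le_mul hgle hQle (norm_nonneg _) zero_le_one
        _ = ‖f 0 z‖ := one_mul _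
    have hle : ‖g z * Qinf z‖ ≤ ‖f 0 z‖ :=
      le_of_tendsto habs (eventually_atTop.mpr ⟨1, hbnd⟩)
    exact lt_of_le_of_lt hle (hflt 0)
end
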